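/- The Graver basis G(A), defined as the set of ⊑-minimal elements of Ker_ℤ(A) \ {0}, is a finite set. -/

import Mathlib

private lemma graver_aux (a b : ℤ) (h1 : a.toNat ≤ b.toNat)
    (h2 : (-a).toNat ≤ (-b).toNat) : 0 ≤ a * b ∧ |a| ≤ |b| := by
  rcases lt_trichotomy a 0 with ha | ha | ha
  · have hb : b ≤ a := by omega
    have hb0 : b < 0 := hb.trans_lt ha
    refine ⟨by nlinarith, ?_⟩
    rw [abs_of_neg ha, abs_of_neg hb0]; omega
  · simp [ha]
  · have hb : a ≤ b := by omega
    exact ⟨mul_nonneg ha.le (ha.le.trans hb), by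
      rw [abs_of_nonneg ha.le, abs_of_nonneg (ha.le.trans hb)]; exact hb⟩

/-- The Graver basis `G(A)`, the set of `⊑`-minimal elements of `Ker_ℤ(A) \ {0}`,
is finite. -/
theorem graver_basis_finite (m n : ℕ) (A : Matrix (Fin m) (Fin n) ℤ) :
    {g : Fin n → ℤ | A.mulVec g = 0 ∧ g ≠ 0 ∧
      ∀ h : Fin n → ℤ, A.mulVec h = 0 → h ≠ 0 →
        (∀ i, 0 ≤ h i * g i ∧ |h i| ≤ |g i|) → h = g}.Finite := by
  set S := {g : Fin n → ℤ | A.mulVec g = 0 ∧ g ≠ 0 ∧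
      ∀ h : Fin n → ℤ, A.mulVec h = 0 → h ≠ 0 →
        (∀ i, 0 ≤ h i * g i ∧ |h i| ≤ |g i|) → h = g} with hS
  by_contra hinf
  have hinf' : S.Infinite := hinf
  let f := hinf'.natEmbedding
  let F : ℕ → (Fin n ⊕ Fin n → ℕ) := fun k =>
    Sum.elim (fun i => ((f k : Fin n → ℤ) i).toNat)
      (fun i => (-(f k : Fin n → ℤ) i).toNat)
  have hpwo : Set.IsPWO (Set.univ : Set (Fin n ⊕ Fin n → ℕ)) := Set.isPWO_of_wellQuasiOrderedLE Set.univ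
  obtain ⟨k, l, hkl, hle⟩ := hpwo.exists_lt (f := F) (fun _ => Set.mem_univ _)
  have hk := (f k).2
  have hl := (f l).2
  simp only [hS, Set.mem_setOf_eq] at hk hl
  have hdom : ∀ i, 0 ≤ (f k : Fin n → ℤ) i * (f l : Fin n → ℤ) i ∧
      |(f k : Fin n → ℤ) i| ≤ |(f l : Fin n → ℤ) i| := by
    intro i
    exact graver_aux _ _ (hle (Sum.inl i)) (hle (Sum.inr i))
  have heq : (f k : Fin n → ℤ) = (f l : Fin n → ℤ) :=
    hl.2.2 _ hk.1 hk.2.1 hdom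
  have : k = l := f.injective (Subtype.ext heq)
  omega
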